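/- Under the hypotheses of the RHOSVD error bound, assume additionally the stability condition ∑_{ν=1}^R ξ_ν² ≤ C ‖A‖² for some constant C > 0 (here ‖·‖ is the Frobenius norm). Then the RHOSVD approximation satisfies the relative error bound ‖A − A⁰_(r)‖ ≤ √C ‖A‖ ∑_{ℓ=1}^{3} (∑_{k=rₗ+1}^{min(n,R)} σ_{ℓ,k}²)^{1/2}. -/

import Mathlib

open Finset Real

lemma cs_sqrt' {α : Type*} (s : Finset α) (f g : α → ℝ) :
    ∑ x ∈ s, f x * g x ≤ Real.sqrt (∑ x ∈ s, f x ^ 2) * Real.sqrt (∑ x ∈ s, g x ^ 2) := by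
  have h := Finset.sum_mul_sq_le_sq_mul_sq s f g
  have hf : 0 ≤ ∑ x ∈ s, f x ^ 2 := Finset.sum_nonneg fun _ _ => sq_nonneg _
  calc ∑ x ∈ s, f x * g x ≤ |∑ x ∈ s, f x * g x| := le_abs_self _
    _ = Real.sqrt ((∑ x ∈ s, f x * g x) ^ 2) := (Real.sqrt_sq_eq_abs _).symm
    _ ≤ Real.sqrt ((∑ x ∈ s, f x ^ 2) * ∑ x ∈ s, g x ^ 2) := Real.sqrt_le_sqrt h
    _ = _ := Real.sqrt_mul hf _

lemma l2_triangle' {α : Type*} (s : Finset α) (f g : α → ℝ) :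
    Real.sqrt (∑ x ∈ s, (f x + g x) ^ 2) ≤
      Real.sqrt (∑ x ∈ s, f x ^ 2) + Real.sqrt (∑ x ∈ s, g x ^ 2) := by
  have hf : 0 ≤ ∑ x ∈ s, f x ^ 2 := Finset.sum_nonneg fun _ _ => sq_nonneg _
  have hg : 0 ≤ ∑ x ∈ s, g x ^ 2 := Finset.sum_nonneg fun _ _ => sq_nonneg _
  have hcs := cs_sqrt' s f g
  have key : ∑ x ∈ s, (f x + g x) ^ 2 ≤
      (Real.sqrt (∑ x ∈ s, f x ^ 2) + Real.sqrt (∑ x ∈ s, g x ^ 2)) ^ 2 := by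
    have hexp : ∀ x, (f x + g x) ^ 2 = f x ^ 2 + 2 * (f x * g x) + g x ^ 2 := fun x => by ring
    simp_rw [hexp, Finset.sum_add_distrib, ← Finset.mul_sum]
    nlinarith [Real.sq_sqrt hf, Real.sq_sqrt hg]
  calc Real.sqrt (∑ x ∈ s, (f x + g x) ^ 2)
      ≤ Real.sqrt ((Real.sqrt (∑ x ∈ s, f x ^ 2) + Real.sqrt (∑ x ∈ s, g x ^ 2)) ^ 2) :=
        Real.sqrt_le_sqrt key
    _ = _ := Real.sqrt_sq (by positivity)

/-- Core bound: `‖∑ ν ξν bν ⊗ cν‖² ≤ (∑ν ‖bν‖²)(∑ν ξν²)` when `‖cν‖ ≤ 1`. -/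
lemma rhosvd_core' {n R : ℕ} (ξ : Fin R → ℝ) (b : Fin R → Fin n → ℝ)
    (c : Fin R → Fin n → Fin n → ℝ)
    (hc : ∀ ν, (∑ y, ∑ z, (c ν y z) ^ 2) ≤ 1) :
    ∑ x, ∑ y, ∑ z, (∑ ν, ξ ν * b ν x * c ν y z) ^ 2 ≤
      (∑ ν, ∑ x, (b ν x) ^ 2) * ∑ ν, (ξ ν) ^ 2 := by
  have key : ∀ (x y z : Fin n), (∑ ν, ξ ν * b ν x * c ν y z) ^ 2 ≤
      (∑ ν, (b ν x) ^ 2) * (∑ ν, (ξ ν * c ν y z) ^ 2) := by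
    intro x y z
    have h := Finset.sum_mul_sq_le_sq_mul_sq Finset.univ
      (fun ν => b ν x) (fun ν => ξ ν * c ν y z)
    calc (∑ ν, ξ ν * b ν x * c ν y z) ^ 2
        = (∑ ν, b ν x * (ξ ν * c ν y z)) ^ 2 := by
          congr 1; exact Finset.sum_congr rfl fun ν _ => by ring
      _ ≤ _ := h
  calc ∑ x, ∑ y, ∑ z, (∑ ν, ξ ν * b ν x * c ν y z) ^ 2
      ≤ ∑ x, ∑ y, ∑ z, (∑ ν, (b ν x) ^ 2) * (∑ ν, (ξ ν * c ν y z) ^ 2) := by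
        refine Finset.sum_le_sum fun x _ => Finset.sum_le_sum fun y _ =>
          Finset.sum_le_sum fun z _ => key x y z
    _ = (∑ x, ∑ ν, (b ν x) ^ 2) * (∑ y, ∑ z, ∑ ν, (ξ ν * c ν y z) ^ 2) := by
        rw [Finset.sum_mul]
        refine Finset.sum_congr rfl fun x _ => ?_
        rw [Finset.mul_sum]
        refine Finset.sum_congr rfl fun y _ => ?_
        rw [Finset.mul_sum]
    _ ≤ (∑ x, ∑ ν, (b ν x) ^ 2) * ∑ ν, (ξ ν) ^ 2 := by
        have hb : 0 ≤ ∑ x, ∑ ν, (b ν x) ^ 2 :=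
          Finset.sum_nonneg fun _ _ => Finset.sum_nonneg fun _ _ => sq_nonneg _
        refine mul_le_mul_of_nonneg_left ?_ hb
        calc ∑ y, ∑ z, ∑ ν, (ξ ν * c ν y z) ^ 2
            = ∑ y, ∑ ν, ∑ z, (ξ ν * c ν y z) ^ 2 :=
              Finset.sum_congr rfl fun y _ => Finset.sum_comm
          _ = ∑ ν, ∑ y, ∑ z, (ξ ν * c ν y z) ^ 2 := Finset.sum_comm
          _ = ∑ ν, (ξ ν) ^ 2 * (∑ y, ∑ z, (c ν y z) ^ 2) := by
              refine Finset.sum_congr rfl fun ν _ => ?_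
              rw [Finset.mul_sum]
              refine Finset.sum_congr rfl fun y _ => ?_
              rw [Finset.mul_sum]
              exact Finset.sum_congr rfl fun z _ => by ring
          _ ≤ ∑ ν, (ξ ν) ^ 2 := Finset.sum_le_sum fun ν _ => by
              have := hc ν
              have h0 : (0:ℝ) ≤ (ξ ν)^2 := sq_nonneg _
              nlinarith
    _ = _ := by rw [Finset.sum_comm]

lemma onb_sum_sq' {n : ℕ} (m : ℕ) (z : ℕ → Fin n → ℝ)
    (hz : ∀ k < m, ∀ k' < m, ∑ i, z k i * z k' i = if k = k' then 1 else 0)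
    (s : Finset ℕ) (hs : ∀ k ∈ s, k < m) (w : ℕ → ℝ) :
    ∑ i, (∑ k ∈ s, w k * z k i) ^ 2 = ∑ k ∈ s, (w k) ^ 2 := by
  have e1 : ∀ i : Fin n, (∑ k ∈ s, w k * z k i) ^ 2
      = ∑ k ∈ s, ∑ k' ∈ s, (w k * z k i) * (w k' * z k' i) := by
    intro i; rw [sq, Finset.sum_mul_sum]
  calc ∑ i, (∑ k ∈ s, w k * z k i) ^ 2
      = ∑ i, ∑ k ∈ s, ∑ k' ∈ s, (w k * z k i) * (w k' * z k' i) :=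
        Finset.sum_congr rfl fun i _ => e1 i
    _ = ∑ k ∈ s, ∑ i, ∑ k' ∈ s, (w k * z k i) * (w k' * z k' i) := Finset.sum_comm
    _ = ∑ k ∈ s, ∑ k' ∈ s, ∑ i, (w k * z k i) * (w k' * z k' i) :=
        Finset.sum_congr rfl fun k _ => Finset.sum_comm
    _ = ∑ k ∈ s, ∑ k' ∈ s, (w k * w k') * ∑ i, z k i * z k' i := by
        refine Finset.sum_congr rfl fun k _ => Finset.sum_congr rfl fun k' _ => ?_
        rw [Finset.mul_sum]
        exact Finset.sum_congr rfl fun i _ => by ring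
    _ = ∑ k ∈ s, ∑ k' ∈ s, if k = k' then w k * w k' else 0 := by
        refine Finset.sum_congr rfl fun k hk => Finset.sum_congr rfl fun k' hk' => ?_
        rw [hz k (hs k hk) k' (hs k' hk'), mul_ite, mul_one, mul_zero]
    _ = ∑ k ∈ s, (w k) ^ 2 := by
        refine Finset.sum_congr rfl fun k hk => ?_
        rw [Finset.sum_ite_eq s k (fun k' => w k * w k'), if_pos hk, sq]

lemma proj_contract' {n : ℕ} (m rl : ℕ) (hr : rl ≤ m) (z : ℕ → Fin n → ℝ)
    (hz : ∀ k < m, ∀ k' < m, ∑ i, z k i * z k' i = if k = k' then 1 else 0)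
    (x : Fin n → ℝ) :
    ∑ i, (∑ i', (∑ t ∈ Finset.range rl, z t i * z t i') * x i') ^ 2 ≤ ∑ i, (x i) ^ 2 := by
  set c : ℕ → ℝ := fun t => ∑ i', z t i' * x i' with hc
  have hs : ∀ t ∈ Finset.range rl, t < m := fun t ht =>
    lt_of_lt_of_le (Finset.mem_range.mp ht) hr
  have e1 : ∀ i : Fin n, ∑ i', (∑ t ∈ Finset.range rl, z t i * z t i') * x i'
      = ∑ t ∈ Finset.range rl, c t * z t i := by
    intro i
    calc ∑ i', (∑ t ∈ Finset.range rl, z t i * z t i') * x i'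
        = ∑ i', ∑ t ∈ Finset.range rl, z t i * z t i' * x i' := by
          refine Finset.sum_congr rfl fun i' _ => ?_; rw [Finset.sum_mul]
      _ = ∑ t ∈ Finset.range rl, ∑ i', z t i * z t i' * x i' := Finset.sum_comm
      _ = ∑ t ∈ Finset.range rl, c t * z t i := by
          refine Finset.sum_congr rfl fun t _ => ?_
          rw [hc]
          simp only
          rw [Finset.sum_mul]
          refine Finset.sum_congr rfl fun i' _ => by ring
  have e2 : ∑ i, (∑ i', (∑ t ∈ Finset.range rl, z t i * z t i') * x i') ^ 2
      = ∑ t ∈ Finset.range rl, (c t) ^ 2 := by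
    calc ∑ i, (∑ i', (∑ t ∈ Finset.range rl, z t i * z t i') * x i') ^ 2
        = ∑ i, (∑ t ∈ Finset.range rl, c t * z t i) ^ 2 :=
          Finset.sum_congr rfl fun i _ => by rw [e1 i]
      _ = ∑ t ∈ Finset.range rl, (c t) ^ 2 := onb_sum_sq' m z hz _ hs c
  rw [e2]
  -- Bessel
  have h0 : 0 ≤ ∑ i, (x i - ∑ t ∈ Finset.range rl, c t * z t i) ^ 2 :=
    Finset.sum_nonneg fun _ _ => sq_nonneg _
  have hcross : ∑ i, x i * ∑ t ∈ Finset.range rl, c t * z t i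
      = ∑ t ∈ Finset.range rl, (c t) ^ 2 := by
    calc ∑ i, x i * ∑ t ∈ Finset.range rl, c t * z t i
        = ∑ i, ∑ t ∈ Finset.range rl, x i * (c t * z t i) := by
          refine Finset.sum_congr rfl fun i _ => ?_; rw [Finset.mul_sum]
      _ = ∑ t ∈ Finset.range rl, ∑ i, x i * (c t * z t i) := Finset.sum_comm
      _ = ∑ t ∈ Finset.range rl, c t * ∑ i, z t i * x i := by
          refine Finset.sum_congr rfl fun t _ => ?_
          rw [Finset.mul_sum]
          exact Finset.sum_congr rfl fun i _ => by ring
      _ = ∑ t ∈ Finset.range rl, (c t) ^ 2 := by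
          refine Finset.sum_congr rfl fun t _ => ?_
          rw [sq]
  have hsq : ∑ i, (∑ t ∈ Finset.range rl, c t * z t i) ^ 2
      = ∑ t ∈ Finset.range rl, (c t) ^ 2 := onb_sum_sq' m z hz _ hs c
  have hexp : ∑ i, (x i - ∑ t ∈ Finset.range rl, c t * z t i) ^ 2
      = ∑ i, (x i) ^ 2 - 2 * ∑ i, x i * ∑ t ∈ Finset.range rl, c t * z t i
        + ∑ i, (∑ t ∈ Finset.range rl, c t * z t i) ^ 2 := by
    rw [Finset.mul_sum, ← Finset.sum_sub_distrib, ← Finset.sum_add_distrib]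
    exact Finset.sum_congr rfl fun i _ => by ring
  rw [hexp, hcross, hsq] at h0
  linarith

lemma tail_eq' {n R : ℕ} (m rl : ℕ) (hr : rl ≤ m)
    (σ : ℕ → ℝ) (z : ℕ → Fin n → ℝ) (v : ℕ → Fin R → ℝ)
    (hz : ∀ k < m, ∀ k' < m, ∑ i, z k i * z k' i = if k = k' then 1 else 0)
    (hv : ∀ k < m, ∀ k' < m, ∑ ν, v k ν * v k' ν = if k = k' then 1 else 0)
    (a : Fin R → Fin n → ℝ)
    (hsvd : ∀ ν i, a ν i = ∑ k ∈ Finset.range m, σ k * z k i * v k ν) :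
    ∑ ν, ∑ i, (a ν i - ∑ i', (∑ t ∈ Finset.range rl, z t i * z t i') * a ν i') ^ 2
      = ∑ k ∈ Finset.Ico rl m, (σ k) ^ 2 := by
  -- the residual is the tail of the SVD expansion
  have hb : ∀ ν i, a ν i - ∑ i', (∑ t ∈ Finset.range rl, z t i * z t i') * a ν i'
      = ∑ k ∈ Finset.Ico rl m, (σ k * v k ν) * z k i := by
    intro ν i
    have hproj : ∀ t, t < m → ∑ i', z t i' * a ν i' = σ t * v t ν := by
      intro t ht
      calc ∑ i', z t i' * a ν i'
          = ∑ i', ∑ k ∈ Finset.range m, z t i' * (σ k * z k i' * v k ν) := by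
            refine Finset.sum_congr rfl fun i' _ => ?_
            rw [hsvd ν i', Finset.mul_sum]
        _ = ∑ k ∈ Finset.range m, ∑ i', z t i' * (σ k * z k i' * v k ν) := Finset.sum_comm
        _ = ∑ k ∈ Finset.range m, (σ k * v k ν) * ∑ i', z t i' * z k i' := by
            refine Finset.sum_congr rfl fun k _ => ?_
            rw [Finset.mul_sum]
            exact Finset.sum_congr rfl fun i' _ => by ring
        _ = ∑ k ∈ Finset.range m, (if t = k then σ k * v k ν else 0) := by
            refine Finset.sum_congr rfl fun k hk => ?_
            rw [hz t ht k (Finset.mem_range.mp hk), mul_ite, mul_one, mul_zero]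
        _ = σ t * v t ν := by
            rw [Finset.sum_ite_eq (Finset.range m) t (fun k => σ k * v k ν),
              if_pos (Finset.mem_range.mpr ht)]
    have h1 : ∑ i', (∑ t ∈ Finset.range rl, z t i * z t i') * a ν i'
        = ∑ t ∈ Finset.range rl, (σ t * v t ν) * z t i := by
      calc ∑ i', (∑ t ∈ Finset.range rl, z t i * z t i') * a ν i'
          = ∑ i', ∑ t ∈ Finset.range rl, z t i * z t i' * a ν i' := by
            refine Finset.sum_congr rfl fun i' _ => ?_; rw [Finset.sum_mul]
        _ = ∑ t ∈ Finset.range rl, ∑ i', z t i * z t i' * a ν i' := Finset.sum_comm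
        _ = ∑ t ∈ Finset.range rl, z t i * ∑ i', z t i' * a ν i' := by
            refine Finset.sum_congr rfl fun t _ => ?_
            rw [Finset.mul_sum]
            exact Finset.sum_congr rfl fun i' _ => by ring
        _ = ∑ t ∈ Finset.range rl, (σ t * v t ν) * z t i := by
            refine Finset.sum_congr rfl fun t ht => ?_
            rw [hproj t (lt_of_lt_of_le (Finset.mem_range.mp ht) hr)]
            ring
    rw [h1, hsvd ν i, Finset.sum_Ico_eq_sub _ hr]
    have : ∀ s : Finset ℕ, ∑ k ∈ s, σ k * z k i * v k ν = ∑ k ∈ s, (σ k * v k ν) * z k i :=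
      fun s => Finset.sum_congr rfl fun k _ => by ring
    rw [this]
  calc ∑ ν, ∑ i, (a ν i - ∑ i', (∑ t ∈ Finset.range rl, z t i * z t i') * a ν i') ^ 2
      = ∑ ν, ∑ i, (∑ k ∈ Finset.Ico rl m, (σ k * v k ν) * z k i) ^ 2 := by
        refine Finset.sum_congr rfl fun ν _ => Finset.sum_congr rfl fun i _ => ?_
        rw [hb ν i]
    _ = ∑ ν, ∑ k ∈ Finset.Ico rl m, (σ k * v k ν) ^ 2 := by
        refine Finset.sum_congr rfl fun ν _ => ?_
        exact onb_sum_sq' m z hz _ (fun k hk => (Finset.mem_Ico.mp hk).2) (fun k => σ k * v k ν)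
    _ = ∑ k ∈ Finset.Ico rl m, ∑ ν, (σ k * v k ν) ^ 2 := Finset.sum_comm
    _ = ∑ k ∈ Finset.Ico rl m, (σ k) ^ 2 := by
        refine Finset.sum_congr rfl fun k hk => ?_
        have hk' := (Finset.mem_Ico.mp hk).2
        have : ∑ ν, (σ k * v k ν) ^ 2 = (σ k) ^ 2 * ∑ ν, v k ν * v k ν := by
          rw [Finset.mul_sum]
          exact Finset.sum_congr rfl fun ν _ => by ring
        rw [this, hv k hk' k hk', if_pos rfl, mul_one]

theorem rhosvd_relative_error_bound (n R : ℕ) (r : Fin 3 → ℕ)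
    (ξ : Fin R → ℝ) (a : Fin 3 → Fin R → Fin n → ℝ)
    (ha : ∀ ℓ ν, ∑ i, (a ℓ ν i) ^ 2 = 1)
    (σ : Fin 3 → ℕ → ℝ) (z : Fin 3 → ℕ → Fin n → ℝ) (v : Fin 3 → ℕ → Fin R → ℝ)
    (hσnn : ∀ ℓ k, 0 ≤ σ ℓ k)
    (hσdec : ∀ ℓ k k', k ≤ k' → σ ℓ k' ≤ σ ℓ k)
    (hz : ∀ ℓ, ∀ k < min n R, ∀ k' < min n R,
      ∑ i, z ℓ k i * z ℓ k' i = if k = k' then 1 else 0)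
    (hv : ∀ ℓ, ∀ k < min n R, ∀ k' < min n R,
      ∑ ν, v ℓ k ν * v ℓ k' ν = if k = k' then 1 else 0)
    (hsvd : ∀ ℓ ν i, a ℓ ν i = ∑ k ∈ Finset.range (min n R), σ ℓ k * z ℓ k i * v ℓ k ν)
    (hr : ∀ ℓ, r ℓ ≤ min n R)
    (A A0 : Fin n → Fin n → Fin n → ℝ)
    (hA : ∀ i j k, A i j k = ∑ ν, ξ ν * a 0 ν i * a 1 ν j * a 2 ν k)
    (P : Fin 3 → Fin n → Fin n → ℝ)
    (hP : ∀ ℓ i i', P ℓ i i' = ∑ t ∈ Finset.range (r ℓ), z ℓ t i * z ℓ t i')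
    (hA0 : ∀ i j k, A0 i j k =
      ∑ i', ∑ j', ∑ k', P 0 i i' * P 1 j j' * P 2 k k' * A i' j' k')
    (C : ℝ) (hC : 0 < C)
    (hstab : ∑ ν, (ξ ν) ^ 2 ≤ C * ∑ i, ∑ j, ∑ k, (A i j k) ^ 2) :
    Real.sqrt (∑ i, ∑ j, ∑ k, (A i j k - A0 i j k) ^ 2) ≤
      Real.sqrt C * Real.sqrt (∑ i, ∑ j, ∑ k, (A i j k) ^ 2) *
        ∑ ℓ : Fin 3, Real.sqrt (∑ k ∈ Finset.Ico (r ℓ) (min n R), (σ ℓ k) ^ 2) := by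
  set u : Fin 3 → Fin R → Fin n → ℝ := fun ℓ ν i => ∑ i', P ℓ i i' * a ℓ ν i' with hu
  set b : Fin 3 → Fin R → Fin n → ℝ := fun ℓ ν i => a ℓ ν i - u ℓ ν i with hb
  -- projected factors are short
  have hubd : ∀ ℓ ν, ∑ i, (u ℓ ν i) ^ 2 ≤ 1 := by
    intro ℓ ν
    have h1 : ∑ i, (u ℓ ν i) ^ 2
        = ∑ i, (∑ i', (∑ t ∈ Finset.range (r ℓ), z ℓ t i * z ℓ t i') * a ℓ ν i') ^ 2 := by
      refine Finset.sum_congr rfl fun i _ => ?_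
      rw [hu]
      simp only
      congr 1
      exact Finset.sum_congr rfl fun i' _ => by rw [hP]
    rw [h1, ← ha ℓ ν]
    exact proj_contract' (min n R) (r ℓ) (hr ℓ) (z ℓ) (hz ℓ) (a ℓ ν)
  have hunn : ∀ ℓ ν, 0 ≤ ∑ i, (u ℓ ν i) ^ 2 :=
    fun ℓ ν => Finset.sum_nonneg fun _ _ => sq_nonneg _
  -- tails
  have hbbd : ∀ ℓ, ∑ ν, ∑ i, (b ℓ ν i) ^ 2 = ∑ k ∈ Finset.Ico (r ℓ) (min n R), (σ ℓ k) ^ 2 := by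
    intro ℓ
    have h1 : ∀ ν i, b ℓ ν i
        = a ℓ ν i - ∑ i', (∑ t ∈ Finset.range (r ℓ), z ℓ t i * z ℓ t i') * a ℓ ν i' := by
      intro ν i
      rw [hb, hu]
      simp only
      congr 1
      exact Finset.sum_congr rfl fun i' _ => by rw [hP]
    calc ∑ ν, ∑ i, (b ℓ ν i) ^ 2
        = ∑ ν, ∑ i, (a ℓ ν i - ∑ i', (∑ t ∈ Finset.range (r ℓ), z ℓ t i * z ℓ t i') * a ℓ ν i') ^ 2 := by
          refine Finset.sum_congr rfl fun ν _ => Finset.sum_congr rfl fun i _ => by rw [h1]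
      _ = _ := tail_eq' (min n R) (r ℓ) (hr ℓ) (σ ℓ) (z ℓ) (v ℓ) (hz ℓ) (hv ℓ) (a ℓ) (hsvd ℓ)
  -- A0 in terms of projected factors
  have hA0' : ∀ i j k, A0 i j k = ∑ ν, ξ ν * u 0 ν i * u 1 ν j * u 2 ν k := by
    intro i j k
    rw [hA0]
    calc ∑ i', ∑ j', ∑ k', P 0 i i' * P 1 j j' * P 2 k k' * A i' j' k'
        = ∑ i', ∑ j', ∑ k', ∑ ν,
            ξ ν * (P 0 i i' * a 0 ν i') * (P 1 j j' * a 1 ν j') * (P 2 k k' * a 2 ν k') := by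
          refine Finset.sum_congr rfl fun i' _ => Finset.sum_congr rfl fun j' _ =>
            Finset.sum_congr rfl fun k' _ => ?_
          rw [hA, Finset.mul_sum]
          exact Finset.sum_congr rfl fun ν _ => by ring
      _ = ∑ i', ∑ j', ∑ ν, ∑ k',
            ξ ν * (P 0 i i' * a 0 ν i') * (P 1 j j' * a 1 ν j') * (P 2 k k' * a 2 ν k') :=
          Finset.sum_congr rfl fun i' _ => Finset.sum_congr rfl fun j' _ => Finset.sum_comm
      _ = ∑ i', ∑ ν, ∑ j', ∑ k',
            ξ ν * (P 0 i i' * a 0 ν i') * (P 1 j j' * a 1 ν j') * (P 2 k k' * a 2 ν k') :=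
          Finset.sum_congr rfl fun i' _ => Finset.sum_comm
      _ = ∑ ν, ∑ i', ∑ j', ∑ k',
            ξ ν * (P 0 i i' * a 0 ν i') * (P 1 j j' * a 1 ν j') * (P 2 k k' * a 2 ν k') :=
          Finset.sum_comm
      _ = ∑ ν, ∑ j', ∑ i', ∑ k',
            ξ ν * (P 0 i i' * a 0 ν i') * (P 1 j j' * a 1 ν j') * (P 2 k k' * a 2 ν k') :=
          Finset.sum_congr rfl fun ν _ => Finset.sum_comm
      _ = ∑ ν, ∑ j', ∑ k', ∑ i',
            ξ ν * (P 0 i i' * a 0 ν i') * (P 1 j j' * a 1 ν j') * (P 2 k k' * a 2 ν k') :=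
          Finset.sum_congr rfl fun ν _ => Finset.sum_congr rfl fun j' _ => Finset.sum_comm
      _ = ∑ ν, ∑ k', ∑ j', ∑ i',
            ξ ν * (P 0 i i' * a 0 ν i') * (P 1 j j' * a 1 ν j') * (P 2 k k' * a 2 ν k') :=
          Finset.sum_congr rfl fun ν _ => Finset.sum_comm
      _ = ∑ ν, ξ ν * u 0 ν i * u 1 ν j * u 2 ν k := by
          refine Finset.sum_congr rfl fun ν _ => ?_
          rw [hu]
          simp only [Finset.mul_sum, Finset.sum_mul]
  -- error decomposition
  have hdec : ∀ i j k, A i j k - A0 i j k =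
      (∑ ν, ξ ν * b 0 ν i * (a 1 ν j * a 2 ν k)) +
      (∑ ν, ξ ν * b 1 ν j * (u 0 ν i * a 2 ν k)) +
      (∑ ν, ξ ν * b 2 ν k * (u 0 ν i * u 1 ν j)) := by
    intro i j k
    rw [hA, hA0', ← Finset.sum_sub_distrib, ← Finset.sum_add_distrib, ← Finset.sum_add_distrib]
    refine Finset.sum_congr rfl fun ν _ => ?_
    rw [hb]
    simp only
    ring
  -- per-mode bounds
  have hc1 : ∀ ν, (∑ y, ∑ zz, (a 1 ν y * a 2 ν zz) ^ 2) ≤ 1 := by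
    intro ν
    have e : ∑ y, ∑ zz, (a 1 ν y * a 2 ν zz) ^ 2
        = (∑ y, (a 1 ν y) ^ 2) * (∑ zz, (a 2 ν zz) ^ 2) := by
      rw [Finset.sum_mul_sum]
      exact Finset.sum_congr rfl fun y _ => Finset.sum_congr rfl fun zz _ => mul_pow _ _ _
    rw [e, ha 1 ν, ha 2 ν, mul_one]
  have hc2 : ∀ ν, (∑ y, ∑ zz, (u 0 ν y * a 2 ν zz) ^ 2) ≤ 1 := by
    intro ν
    have e : ∑ y, ∑ zz, (u 0 ν y * a 2 ν zz) ^ 2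
        = (∑ y, (u 0 ν y) ^ 2) * (∑ zz, (a 2 ν zz) ^ 2) := by
      rw [Finset.sum_mul_sum]
      exact Finset.sum_congr rfl fun y _ => Finset.sum_congr rfl fun zz _ => mul_pow _ _ _
    rw [e, ha 2 ν, mul_one]
    exact hubd 0 ν
  have hc3 : ∀ ν, (∑ y, ∑ zz, (u 0 ν y * u 1 ν zz) ^ 2) ≤ 1 := by
    intro ν
    have e : ∑ y, ∑ zz, (u 0 ν y * u 1 ν zz) ^ 2
        = (∑ y, (u 0 ν y) ^ 2) * (∑ zz, (u 1 ν zz) ^ 2) := by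
      rw [Finset.sum_mul_sum]
      exact Finset.sum_congr rfl fun y _ => Finset.sum_congr rfl fun zz _ => mul_pow _ _ _
    rw [e]
    have := hubd 0 ν; have := hubd 1 ν; have := hunn 0 ν; have := hunn 1 ν
    nlinarith
  have hE1 : ∑ i, ∑ j, ∑ k, (∑ ν, ξ ν * b 0 ν i * (a 1 ν j * a 2 ν k)) ^ 2
      ≤ (∑ k ∈ Finset.Ico (r 0) (min n R), (σ 0 k) ^ 2) * ∑ ν, (ξ ν) ^ 2 := by
    have h := rhosvd_core' ξ (b 0) (fun ν y zz => a 1 ν y * a 2 ν zz) hc1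
    rw [hbbd 0] at h
    exact h
  have hE2 : ∑ i, ∑ j, ∑ k, (∑ ν, ξ ν * b 1 ν j * (u 0 ν i * a 2 ν k)) ^ 2
      ≤ (∑ k ∈ Finset.Ico (r 1) (min n R), (σ 1 k) ^ 2) * ∑ ν, (ξ ν) ^ 2 := by
    have e : ∑ i, ∑ j, ∑ k, (∑ ν, ξ ν * b 1 ν j * (u 0 ν i * a 2 ν k)) ^ 2
        = ∑ j, ∑ i, ∑ k, (∑ ν, ξ ν * b 1 ν j * (u 0 ν i * a 2 ν k)) ^ 2 := Finset.sum_comm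
    rw [e]
    have h := rhosvd_core' ξ (b 1) (fun ν y zz => u 0 ν y * a 2 ν zz) hc2
    rw [hbbd 1] at h
    exact h
  have hE3 : ∑ i, ∑ j, ∑ k, (∑ ν, ξ ν * b 2 ν k * (u 0 ν i * u 1 ν j)) ^ 2
      ≤ (∑ k ∈ Finset.Ico (r 2) (min n R), (σ 2 k) ^ 2) * ∑ ν, (ξ ν) ^ 2 := by
    have e : ∑ i, ∑ j, ∑ k, (∑ ν, ξ ν * b 2 ν k * (u 0 ν i * u 1 ν j)) ^ 2
        = ∑ k, ∑ i, ∑ j, (∑ ν, ξ ν * b 2 ν k * (u 0 ν i * u 1 ν j)) ^ 2 := by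
      calc ∑ i, ∑ j, ∑ k, (∑ ν, ξ ν * b 2 ν k * (u 0 ν i * u 1 ν j)) ^ 2
          = ∑ i, ∑ k, ∑ j, (∑ ν, ξ ν * b 2 ν k * (u 0 ν i * u 1 ν j)) ^ 2 :=
            Finset.sum_congr rfl fun i _ => Finset.sum_comm
        _ = ∑ k, ∑ i, ∑ j, (∑ ν, ξ ν * b 2 ν k * (u 0 ν i * u 1 ν j)) ^ 2 := Finset.sum_comm
    rw [e]
    have h := rhosvd_core' ξ (b 2) (fun ν y zz => u 0 ν y * u 1 ν zz) hc3
    rw [hbbd 2] at h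
    exact h
  -- flattening triple sums
  have flat : ∀ f : Fin n → Fin n → Fin n → ℝ,
      (∑ i, ∑ j, ∑ k, f i j k) = ∑ p : Fin n × Fin n × Fin n, f p.1 p.2.1 p.2.2 := by
    intro f
    rw [Fintype.sum_prod_type]
    exact Finset.sum_congr rfl fun i _ => by rw [Fintype.sum_prod_type]
  set F1 : Fin n × Fin n × Fin n → ℝ :=
    fun p => ∑ ν, ξ ν * b 0 ν p.1 * (a 1 ν p.2.1 * a 2 ν p.2.2) with hF1
  set F2 : Fin n × Fin n × Fin n → ℝ :=
    fun p => ∑ ν, ξ ν * b 1 ν p.2.1 * (u 0 ν p.1 * a 2 ν p.2.2) with hF2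
  set F3 : Fin n × Fin n × Fin n → ℝ :=
    fun p => ∑ ν, ξ ν * b 2 ν p.2.2 * (u 0 ν p.1 * u 1 ν p.2.1) with hF3
  have tri : Real.sqrt (∑ i, ∑ j, ∑ k, (A i j k - A0 i j k) ^ 2) ≤
      Real.sqrt (∑ i, ∑ j, ∑ k, (∑ ν, ξ ν * b 0 ν i * (a 1 ν j * a 2 ν k)) ^ 2) +
      Real.sqrt (∑ i, ∑ j, ∑ k, (∑ ν, ξ ν * b 1 ν j * (u 0 ν i * a 2 ν k)) ^ 2) +
      Real.sqrt (∑ i, ∑ j, ∑ k, (∑ ν, ξ ν * b 2 ν k * (u 0 ν i * u 1 ν j)) ^ 2) := by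
    have h1 : ∑ i, ∑ j, ∑ k, (A i j k - A0 i j k) ^ 2
        = ∑ p : Fin n × Fin n × Fin n, ((F1 p + F2 p) + F3 p) ^ 2 := by
      rw [flat (fun i j k => (A i j k - A0 i j k) ^ 2)]
      refine Finset.sum_congr rfl fun p _ => ?_
      rw [hdec p.1 p.2.1 p.2.2]
    rw [h1,
      flat (fun i j k => (∑ ν, ξ ν * b 0 ν i * (a 1 ν j * a 2 ν k)) ^ 2),
      flat (fun i j k => (∑ ν, ξ ν * b 1 ν j * (u 0 ν i * a 2 ν k)) ^ 2),
      flat (fun i j k => (∑ ν, ξ ν * b 2 ν k * (u 0 ν i * u 1 ν j)) ^ 2)]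
    calc Real.sqrt (∑ p : Fin n × Fin n × Fin n, ((F1 p + F2 p) + F3 p) ^ 2)
        ≤ Real.sqrt (∑ p : Fin n × Fin n × Fin n, (F1 p + F2 p) ^ 2) +
          Real.sqrt (∑ p : Fin n × Fin n × Fin n, (F3 p) ^ 2) :=
          l2_triangle' Finset.univ (fun p => F1 p + F2 p) F3
      _ ≤ (Real.sqrt (∑ p : Fin n × Fin n × Fin n, (F1 p) ^ 2) +
          Real.sqrt (∑ p : Fin n × Fin n × Fin n, (F2 p) ^ 2)) +
          Real.sqrt (∑ p : Fin n × Fin n × Fin n, (F3 p) ^ 2) :=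
          add_le_add (l2_triangle' Finset.univ F1 F2) le_rfl
  -- put everything together
  have hT0 : (0:ℝ) ≤ ∑ k ∈ Finset.Ico (r 0) (min n R), (σ 0 k) ^ 2 :=
    Finset.sum_nonneg fun _ _ => sq_nonneg _
  have hT1 : (0:ℝ) ≤ ∑ k ∈ Finset.Ico (r 1) (min n R), (σ 1 k) ^ 2 :=
    Finset.sum_nonneg fun _ _ => sq_nonneg _
  have hT2 : (0:ℝ) ≤ ∑ k ∈ Finset.Ico (r 2) (min n R), (σ 2 k) ^ 2 :=
    Finset.sum_nonneg fun _ _ => sq_nonneg _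
  have hSN : Real.sqrt (∑ ν, (ξ ν) ^ 2) ≤
      Real.sqrt C * Real.sqrt (∑ i, ∑ j, ∑ k, (A i j k) ^ 2) := by
    rw [← Real.sqrt_mul (le_of_lt hC)]
    exact Real.sqrt_le_sqrt hstab
  have s1 : Real.sqrt (∑ i, ∑ j, ∑ k, (∑ ν, ξ ν * b 0 ν i * (a 1 ν j * a 2 ν k)) ^ 2)
      ≤ Real.sqrt (∑ k ∈ Finset.Ico (r 0) (min n R), (σ 0 k) ^ 2) *
        Real.sqrt (∑ ν, (ξ ν) ^ 2) := by
    rw [← Real.sqrt_mul hT0]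
    exact Real.sqrt_le_sqrt hE1
  have s2 : Real.sqrt (∑ i, ∑ j, ∑ k, (∑ ν, ξ ν * b 1 ν j * (u 0 ν i * a 2 ν k)) ^ 2)
      ≤ Real.sqrt (∑ k ∈ Finset.Ico (r 1) (min n R), (σ 1 k) ^ 2) *
        Real.sqrt (∑ ν, (ξ ν) ^ 2) := by
    rw [← Real.sqrt_mul hT1]
    exact Real.sqrt_le_sqrt hE2
  have s3 : Real.sqrt (∑ i, ∑ j, ∑ k, (∑ ν, ξ ν * b 2 ν k * (u 0 ν i * u 1 ν j)) ^ 2)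
      ≤ Real.sqrt (∑ k ∈ Finset.Ico (r 2) (min n R), (σ 2 k) ^ 2) *
        Real.sqrt (∑ ν, (ξ ν) ^ 2) := by
    rw [← Real.sqrt_mul hT2]
    exact Real.sqrt_le_sqrt hE3
  rw [Fin.sum_univ_three]
  have m0 := mul_le_mul_of_nonneg_left hSN (Real.sqrt_nonneg
    (∑ k ∈ Finset.Ico (r 0) (min n R), (σ 0 k) ^ 2))
  have m1 := mul_le_mul_of_nonneg_left hSN (Real.sqrt_nonneg
    (∑ k ∈ Finset.Ico (r 1) (min n R), (σ 1 k) ^ 2))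
  have m2 := mul_le_mul_of_nonneg_left hSN (Real.sqrt_nonneg
    (∑ k ∈ Finset.Ico (r 2) (min n R), (σ 2 k) ^ 2))
  calc Real.sqrt (∑ i, ∑ j, ∑ k, (A i j k - A0 i j k) ^ 2)
      ≤ _ := tri
    _ ≤ Real.sqrt (∑ k ∈ Finset.Ico (r 0) (min n R), (σ 0 k) ^ 2) *
          (Real.sqrt C * Real.sqrt (∑ i, ∑ j, ∑ k, (A i j k) ^ 2)) +
        Real.sqrt (∑ k ∈ Finset.Ico (r 1) (min n R), (σ 1 k) ^ 2) *
          (Real.sqrt C * Real.sqrt (∑ i, ∑ j, ∑ k, (A i j k) ^ 2)) +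
        Real.sqrt (∑ k ∈ Finset.Ico (r 2) (min n R), (σ 2 k) ^ 2) *
          (Real.sqrt C * Real.sqrt (∑ i, ∑ j, ∑ k, (A i j k) ^ 2)) := by linarith
    _ = Real.sqrt C * Real.sqrt (∑ i, ∑ j, ∑ k, (A i j k) ^ 2) *
        (Real.sqrt (∑ k ∈ Finset.Ico (r 0) (min n R), (σ 0 k) ^ 2) +
         Real.sqrt (∑ k ∈ Finset.Ico (r 1) (min n R), (σ 1 k) ^ 2) +
         Real.sqrt (∑ k ∈ Finset.Ico (r 2) (min n R), (σ 2 k) ^ 2)) := by ring
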